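/- Let δ > 0 and let ω : (0,δ) → ℝ be measurable and nonnegative with weighted volume m := ∫_{B_δ(0)⊂ℝ²} ω(‖ξ‖) ‖ξ‖² dξ satisfying 0 < m < ∞. Given real constants C₁₁₁₁, C₁₁₂₂, C₁₁₁₂, C₂₂₁₂, C₂₂₂₂, define Λ₁₁₁₁ = 10C₁₁₁₁ − 20C₁₁₂₂ + 2C₂₂₂₂, Λ₁₁₁₂ = 20C₁₁₁₂ − 12C₂₂₁₂, Λ₁₁₂₂ = (−10C₁₁₁₁ + 76C₁₁₂₂ − 10C₂₂₂₂)/3, Λ₂₂₁₂ = −12C₁₁₁₂ + 20C₂₂₁₂, Λ₂₂₂₂ = 2C₁₁₁₁ − 20C₁₁₂₂ + 10C₂₂₂₂, and define the two-dimensional micromodulus function λ(ξ) := (1/m) · (Λ₁₁₁₁ ξ₁⁴ + 4Λ₁₁₁₂ ξ₁³ξ₂ + 6Λ₁₁₂₂ ξ₁²ξ₂² + 4Λ₂₂₁₂ ξ₁ξ₂³ + Λ₂₂₂₂ ξ₂⁴) · ω(‖ξ‖)/‖ξ‖⁶ for ξ ∈ B_δ(0)∖{0}. Then (1/2)∫_{B_δ(0)}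 λ(ξ) ξ₁⁴ dξ = C₁₁₁₁, (1/2)∫_{B_δ(0)} λ(ξ) ξ₁³ξ₂ dξ = C₁₁₁₂, (1/2)∫_{B_δ(0)} λ(ξ) ξ₁²ξ₂² dξ = C₁₁₂₂, (1/2)∫_{B_δ(0)} λ(ξ) ξ₁ξ₂³ dξ = C₂₂₁₂, and (1/2)∫_{B_δ(0)} λ(ξ) ξ₂⁴ dξ = C₂₂₂₂. -/

import Mathlib

open MeasureTheory Real Set

private lemma stmt12_norm_eq (ξ : EuclideanSpace ℝ (Fin 2)) :
    ‖ξ‖ = Real.sqrt ((ξ 0)^2 + (ξ 1)^2) := by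
  rw [EuclideanSpace.norm_eq, Fin.sum_univ_two]
  simp [Real.norm_eq_abs, sq_abs]

private lemma stmt12_coord_abs_le (ξ : EuclideanSpace ℝ (Fin 2)) :
    |ξ 0| ≤ ‖ξ‖ ∧ |ξ 1| ≤ ‖ξ‖ := by
  rw [stmt12_norm_eq]
  constructor
  · rw [← Real.sqrt_sq_eq_abs]
    exact Real.sqrt_le_sqrt (by nlinarith [sq_nonneg (ξ 1)])
  · rw [← Real.sqrt_sq_eq_abs]
    exact Real.sqrt_le_sqrt (by nlinarith [sq_nonneg (ξ 0)])

private lemma stmt12_polar_ball (δ : ℝ) (hδ : 0 < δ) (Φ : ℝ → ℝ → ℝ) :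
    ∫ ξ in Metric.ball (0 : EuclideanSpace ℝ (Fin 2)) δ, Φ (ξ 0) (ξ 1)
      = ∫ p in Set.Ioo (0:ℝ) δ ×ˢ Set.Ioo (-π) π,
          p.1 * Φ (p.1 * Real.cos p.2) (p.1 * Real.sin p.2) := by
  set G : ℝ × ℝ → ℝ := fun p => if p.1^2 + p.2^2 < δ^2 then Φ p.1 p.2 else 0 with hG
  have hmem : ∀ ξ : EuclideanSpace ℝ (Fin 2), ξ ∈ Metric.ball (0 : EuclideanSpace ℝ (Fin 2)) δ ↔
      (ξ 0)^2 + (ξ 1)^2 < δ^2 := by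
    intro ξ
    rw [Metric.mem_ball, dist_zero_right, stmt12_norm_eq]
    constructor
    · intro h
      have h0 : (0:ℝ) ≤ (ξ 0)^2 + (ξ 1)^2 := by positivity
      nlinarith [Real.sq_sqrt h0, Real.sqrt_nonneg ((ξ 0)^2 + (ξ 1)^2)]
    · intro h
      have : Real.sqrt ((ξ 0)^2 + (ξ 1)^2) < Real.sqrt (δ^2) := by
        apply Real.sqrt_lt_sqrt (by positivity) h
      rwa [Real.sqrt_sq hδ.le] at this
  have step1 : ∫ ξ in Metric.ball (0 : EuclideanSpace ℝ (Fin 2)) δ, Φ (ξ 0) (ξ 1)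
      = ∫ ξ : EuclideanSpace ℝ (Fin 2), G (ξ 0, ξ 1) := by
    rw [← integral_indicator measurableSet_ball]
    congr 1; funext ξ
    by_cases h : ξ ∈ Metric.ball (0 : EuclideanSpace ℝ (Fin 2)) δ
    · rw [Set.indicator_of_mem h, hG]; simp only [(hmem ξ).1 h, if_true]
    · rw [Set.indicator_of_notMem h, hG]
      simp only [(hmem ξ).not.1 h, if_false]
  have step2 : ∫ ξ : EuclideanSpace ℝ (Fin 2), G (ξ 0, ξ 1) = ∫ p : ℝ × ℝ, G p := by
    have hmp := (volume_preserving_finTwoArrow ℝ).comp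
      (EuclideanSpace.volume_preserving_symm_measurableEquiv_toLp (Fin 2))
    have hemb := ((MeasurableEquiv.toLp 2 (Fin 2 → ℝ)).symm.trans
      MeasurableEquiv.finTwoArrow).measurableEmbedding
    have := hmp.integral_comp hemb G
    convert this using 1
    rfl
  have step3 : ∫ p : ℝ × ℝ, G p
      = ∫ p in polarCoord.target, p.1 • G (polarCoord.symm p) :=
    (integral_comp_polarCoord_symm G).symm
  have step4 : ∫ p in polarCoord.target, p.1 • G (polarCoord.symm p)
      = ∫ p in Set.Ioo (0:ℝ) δ ×ˢ Set.Ioo (-π) π,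
          p.1 * Φ (p.1 * Real.cos p.2) (p.1 * Real.sin p.2) := by
    rw [show polarCoord.target = Set.Ioi (0:ℝ) ×ˢ Set.Ioo (-π) π from rfl]
    rw [setIntegral_congr_fun (measurableSet_Ioi.prod measurableSet_Ioo)
      (g := (Set.Iio δ ×ˢ (Set.univ : Set ℝ)).indicator
        (fun p => p.1 * Φ (p.1 * Real.cos p.2) (p.1 * Real.sin p.2)))
      (fun p hp => ?_)]
    · rw [setIntegral_indicator (measurableSet_Iio.prod MeasurableSet.univ),
        Set.prod_inter_prod, Set.Ioi_inter_Iio, Set.inter_univ]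
    · obtain ⟨hr, hθ⟩ := hp
      simp only [Set.mem_Ioi] at hr
      have hcond : (p.1 * Real.cos p.2)^2 + (p.1 * Real.sin p.2)^2 = p.1^2 := by
        have := Real.sin_sq_add_cos_sq p.2; nlinarith
      have hiff : ((p.1 * Real.cos p.2)^2 + (p.1 * Real.sin p.2)^2 < δ^2) ↔ p.1 < δ := by
        rw [hcond]
        constructor
        · intro h; nlinarith
        · intro h; nlinarith
      rw [polarCoord_symm_apply, hG]
      by_cases h : p.1 < δ
      · rw [Set.indicator_of_mem (by exact ⟨h, Set.mem_univ _⟩)]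
        simp only [hiff.2 h, if_true, smul_eq_mul]
      · rw [Set.indicator_of_notMem (by simp [h])]
        simp only [hiff.not.2 h, if_false, smul_eq_mul, mul_zero]
  rw [step1, step2, step3, step4]

private lemma stmt12_sqrt_polar (r θ : ℝ) (hr : 0 ≤ r) :
    Real.sqrt ((r * Real.cos θ)^2 + (r * Real.sin θ)^2) = r := by
  have h : (r * Real.cos θ)^2 + (r * Real.sin θ)^2 = r^2 := by
    have := Real.sin_sq_add_cos_sq θ; nlinarith
  rw [h, Real.sqrt_sq hr]

private lemma stmt12_radial_angular (δ : ℝ) (hδ : 0 < δ) (ω : ℝ → ℝ) (a b : ℕ) (hab : a + b = 8) :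
    ∫ ξ in Metric.ball (0 : EuclideanSpace ℝ (Fin 2)) δ, ω ‖ξ‖ / ‖ξ‖^6 * ((ξ 0)^a * (ξ 1)^b)
      = (∫ r in Set.Ioo (0:ℝ) δ, ω r * r^3)
        * ∫ θ in Set.Ioo (-π) π, Real.sin θ^b * Real.cos θ^a := by
  have h1 : ∫ ξ in Metric.ball (0 : EuclideanSpace ℝ (Fin 2)) δ,
      ω ‖ξ‖ / ‖ξ‖^6 * ((ξ 0)^a * (ξ 1)^b)
      = ∫ ξ in Metric.ball (0 : EuclideanSpace ℝ (Fin 2)) δ,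
        (fun x y => ω (Real.sqrt (x^2+y^2)) / (Real.sqrt (x^2+y^2))^6 * (x^a * y^b)) (ξ 0) (ξ 1) := by
    apply setIntegral_congr_fun measurableSet_ball
    intro ξ _
    simp only [stmt12_norm_eq ξ]
  rw [h1, stmt12_polar_ball δ hδ
    (fun x y => ω (Real.sqrt (x^2+y^2)) / (Real.sqrt (x^2+y^2))^6 * (x^a * y^b))]
  rw [setIntegral_congr_fun ((measurableSet_Ioo).prod measurableSet_Ioo)
    (g := fun p : ℝ × ℝ => (ω p.1 * p.1^3) * (Real.sin p.2^b * Real.cos p.2^a))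
    (fun p hp => ?_)]
  · rw [Measure.volume_eq_prod]
    exact setIntegral_prod_mul (fun r => ω r * r^3) (fun θ => Real.sin θ^b * Real.cos θ^a) _ _
  · obtain ⟨hr, _⟩ := hp
    simp only [Set.mem_Ioo] at hr
    have hr0 : (0:ℝ) < p.1 := hr.1
    simp only [stmt12_sqrt_polar p.1 p.2 hr0.le]
    have hpow : (p.1 * Real.cos p.2)^a * (p.1 * Real.sin p.2)^b
        = p.1^8 * (Real.cos p.2^a * Real.sin p.2^b) := by
      rw [mul_pow, mul_pow, mul_mul_mul_comm, ← pow_add, hab]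
    rw [hpow]
    field_simp

private lemma stmt12_radial_m (δ : ℝ) (hδ : 0 < δ) (ω : ℝ → ℝ) :
    ∫ ξ in Metric.ball (0 : EuclideanSpace ℝ (Fin 2)) δ, ω ‖ξ‖ * ‖ξ‖^2
      = (∫ r in Set.Ioo (0:ℝ) δ, ω r * r^3) * (2*π) := by
  have h1 : ∫ ξ in Metric.ball (0 : EuclideanSpace ℝ (Fin 2)) δ, ω ‖ξ‖ * ‖ξ‖^2
      = ∫ ξ in Metric.ball (0 : EuclideanSpace ℝ (Fin 2)) δ,
        (fun x y => ω (Real.sqrt (x^2+y^2)) * (Real.sqrt (x^2+y^2))^2) (ξ 0) (ξ 1) := by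
    apply setIntegral_congr_fun measurableSet_ball
    intro ξ _
    simp only [stmt12_norm_eq ξ]
  rw [h1, stmt12_polar_ball δ hδ
    (fun x y => ω (Real.sqrt (x^2+y^2)) * (Real.sqrt (x^2+y^2))^2)]
  rw [setIntegral_congr_fun ((measurableSet_Ioo).prod measurableSet_Ioo)
    (g := fun p : ℝ × ℝ => (ω p.1 * p.1^3) * (1:ℝ))
    (fun p hp => ?_)]
  · rw [Measure.volume_eq_prod,
      setIntegral_prod_mul (fun r => ω r * r^3) (fun _ : ℝ => (1:ℝ)) (Set.Ioo 0 δ) (Set.Ioo (-π) π)]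
    congr 1
    rw [setIntegral_const]
    simp [Real.volume_Ioo, smul_eq_mul]
    rw [max_eq_left (by positivity)]
    ring
  · obtain ⟨hr, _⟩ := hp
    simp only [Set.mem_Ioo] at hr
    simp only [stmt12_sqrt_polar p.1 p.2 hr.1.le]
    ring

private lemma stmt12_ang_odd (m n : ℕ) :
    ∫ x in (-π)..π, Real.sin x^(2*m+1) * Real.cos x^n = 0 := by
  rw [integral_sin_pow_odd_mul_cos_pow]
  rw [show Real.cos (-π) = Real.cos π by rw [Real.cos_neg]]
  exact intervalIntegral.integral_same

private lemma stmt12_cos_pow_vals :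
    (∫ x in (-π)..π, Real.cos x^0 = 2*π) ∧ (∫ x in (-π)..π, Real.cos x^2 = π) ∧
    (∫ x in (-π)..π, Real.cos x^4 = 3*π/4) ∧ (∫ x in (-π)..π, Real.cos x^6 = 5*π/8) ∧
    (∫ x in (-π)..π, Real.cos x^8 = 35*π/64) := by
  have c0 : ∫ x in (-π)..π, Real.cos x^0 = 2*π := by
    simp; ring
  have step : ∀ n : ℕ, (∫ x in (-π)..π, Real.cos x^(n+2))
      = (n+1)/(n+2) * ∫ x in (-π)..π, Real.cos x^n := by
    intro n
    rw [integral_cos_pow]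
    simp [Real.sin_pi]
  have c2 : ∫ x in (-π)..π, Real.cos x^2 = π := by
    have := step 0; rw [this, c0]; norm_num; ring
  have c4 : ∫ x in (-π)..π, Real.cos x^4 = 3*π/4 := by
    have := step 2; rw [show (2+2)=4 from rfl] at this; rw [this, c2]; norm_num; ring
  have c6 : ∫ x in (-π)..π, Real.cos x^6 = 5*π/8 := by
    have := step 4; rw [show (4+2)=6 from rfl] at this; rw [this, c4]; norm_num; ring
  have c8 : ∫ x in (-π)..π, Real.cos x^8 = 35*π/64 := by
    have := step 6; rw [show (6+2)=8 from rfl] at this; rw [this, c6]; norm_num; ring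
  exact ⟨c0, c2, c4, c6, c8⟩

private lemma stmt12_ang_even_vals :
    (∫ x in (-π)..π, Real.sin x^0 * Real.cos x^8 = 35*π/64) ∧
    (∫ x in (-π)..π, Real.sin x^2 * Real.cos x^6 = 5*π/64) ∧
    (∫ x in (-π)..π, Real.sin x^4 * Real.cos x^4 = 3*π/64) ∧
    (∫ x in (-π)..π, Real.sin x^6 * Real.cos x^2 = 5*π/64) ∧
    (∫ x in (-π)..π, Real.sin x^8 * Real.cos x^0 = 35*π/64) := by
  obtain ⟨c0, c2, c4, c6, c8⟩ := stmt12_cos_pow_vals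
  have ii : ∀ n : ℕ, IntervalIntegrable (fun x => Real.cos x ^ n) volume (-π) π :=
    fun n => Continuous.intervalIntegrable (by fun_prop) _ _
  refine ⟨?_, ?_, ?_, ?_, ?_⟩
  · rw [intervalIntegral.integral_congr (g := fun x => Real.cos x^8)
      (fun x _ => by rw [pow_zero, one_mul])]
    rw [c8]
  · rw [intervalIntegral.integral_congr (g := fun x => Real.cos x^6 - Real.cos x^8)
      (fun x _ => by rw [Real.sin_sq]; ring)]
    rw [intervalIntegral.integral_sub (ii 6) (ii 8), c6, c8]; ring
  · rw [intervalIntegral.integral_congr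
      (g := fun x => Real.cos x^4 - 2*Real.cos x^6 + Real.cos x^8)
      (fun x _ => by rw [show Real.sin x^4 = (Real.sin x^2)^2 by ring, Real.sin_sq]; ring)]
    rw [intervalIntegral.integral_add (((ii 4).sub ((ii 6).const_mul 2))) (ii 8),
      intervalIntegral.integral_sub (ii 4) ((ii 6).const_mul 2),
      intervalIntegral.integral_const_mul, c4, c6, c8]
    ring
  · rw [intervalIntegral.integral_congr
      (g := fun x => Real.cos x^2 - 3*Real.cos x^4 + 3*Real.cos x^6 - Real.cos x^8)
      (fun x _ => by rw [show Real.sin x^6 = (Real.sin x^2)^3 by ring, Real.sin_sq]; ring)]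
    rw [intervalIntegral.integral_sub
        ((((ii 2).sub ((ii 4).const_mul 3)).add ((ii 6).const_mul 3))) (ii 8),
      intervalIntegral.integral_add ((ii 2).sub ((ii 4).const_mul 3)) ((ii 6).const_mul 3),
      intervalIntegral.integral_sub (ii 2) ((ii 4).const_mul 3),
      intervalIntegral.integral_const_mul, intervalIntegral.integral_const_mul, c2, c4, c6, c8]
    ring
  · rw [intervalIntegral.integral_congr
      (g := fun x => Real.cos x^0 - 4*Real.cos x^2 + 6*Real.cos x^4 - 4*Real.cos x^6 + Real.cos x^8)
      (fun x _ => by rw [show Real.sin x^8 = (Real.sin x^2)^4 by ring, Real.sin_sq]; ring)]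
    rw [intervalIntegral.integral_add
        ((((ii 0).sub ((ii 2).const_mul 4)).add ((ii 4).const_mul 6)).sub ((ii 6).const_mul 4))
        (ii 8),
      intervalIntegral.integral_sub
        (((ii 0).sub ((ii 2).const_mul 4)).add ((ii 4).const_mul 6)) ((ii 6).const_mul 4),
      intervalIntegral.integral_add ((ii 0).sub ((ii 2).const_mul 4)) ((ii 4).const_mul 6),
      intervalIntegral.integral_sub (ii 0) ((ii 2).const_mul 4),
      intervalIntegral.integral_const_mul, intervalIntegral.integral_const_mul,
      intervalIntegral.integral_const_mul, c0, c2, c4, c6, c8]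
    ring

private lemma stmt12_int_on (δ : ℝ) (ω : ℝ → ℝ) (hω : Measurable ω)
    (hωnn : ∀ r ∈ Set.Ioo (0:ℝ) δ, 0 ≤ ω r)
    (hmint : IntegrableOn (fun ξ : EuclideanSpace ℝ (Fin 2) => ω ‖ξ‖ * ‖ξ‖^2)
      (Metric.ball (0 : EuclideanSpace ℝ (Fin 2)) δ))
    (a b : ℕ) (hab : a + b = 8) :
    IntegrableOn (fun ξ : EuclideanSpace ℝ (Fin 2) => ω ‖ξ‖ / ‖ξ‖^6 * ((ξ 0)^a * (ξ 1)^b))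
      (Metric.ball (0 : EuclideanSpace ℝ (Fin 2)) δ) := by
  apply hmint.mono'
  · exact (((hω.comp measurable_norm).div (measurable_norm.pow_const 6)).mul
      ((((measurable_pi_apply 0).comp (WithLp.measurable_ofLp 2 _)).pow_const a).mul
        (((measurable_pi_apply 1).comp (WithLp.measurable_ofLp 2 _)).pow_const b))).aestronglyMeasurable
  · rw [ae_restrict_iff' measurableSet_ball]
    refine ae_of_all _ (fun ξ hξ => ?_)
    rcases eq_or_ne ξ 0 with rfl | hne
    · have h0 : (0 : EuclideanSpace ℝ (Fin 2)) 0 = 0 := rfl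
      have h1 : (0 : EuclideanSpace ℝ (Fin 2)) 1 = 0 := rfl
      simp [h0, h1, div_zero]
    · have hr0 : 0 < ‖ξ‖ := norm_pos_iff.2 hne
      have hrδ : ‖ξ‖ < δ := by simpa [dist_zero_right] using hξ
      have hω0 : 0 ≤ ω ‖ξ‖ := hωnn _ ⟨hr0, hrδ⟩
      have hx := (stmt12_coord_abs_le ξ).1
      have hy := (stmt12_coord_abs_le ξ).2
      simp only [Real.norm_eq_abs, abs_mul, abs_div, abs_pow, abs_of_nonneg hω0,
        abs_of_nonneg (norm_nonneg ξ)]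
      calc ω ‖ξ‖ / ‖ξ‖^6 * (|ξ 0|^a * |ξ 1|^b)
          ≤ ω ‖ξ‖ / ‖ξ‖^6 * (‖ξ‖^a * ‖ξ‖^b) := by
            gcongr
        _ = ω ‖ξ‖ * ‖ξ‖^2 := by
            rw [← pow_add, hab]
            field_simp [hr0.ne']


private lemma stmt12_sum5 {α : Type*} [MeasurableSpace α] {μ : Measure α}
    (f1 f2 f3 f4 f5 : α → ℝ) (c1 c2 c3 c4 c5 : ℝ)
    (h1 : Integrable f1 μ) (h2 : Integrable f2 μ) (h3 : Integrable f3 μ)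
    (h4 : Integrable f4 μ) (h5 : Integrable f5 μ) :
    ∫ x, (c1 * f1 x + (c2 * f2 x + (c3 * f3 x + (c4 * f4 x + c5 * f5 x)))) ∂μ
      = c1 * (∫ x, f1 x ∂μ) + (c2 * (∫ x, f2 x ∂μ) + (c3 * (∫ x, f3 x ∂μ)
        + (c4 * (∫ x, f4 x ∂μ) + c5 * (∫ x, f5 x ∂μ)))) := by
  have i1 : Integrable (fun x => c1 * f1 x) μ := h1.const_mul c1
  have i2 : Integrable (fun x => c2 * f2 x) μ := h2.const_mul c2
  have i3 : Integrable (fun x => c3 * f3 x) μ := h3.const_mul c3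
  have i4 : Integrable (fun x => c4 * f4 x) μ := h4.const_mul c4
  have i5 : Integrable (fun x => c5 * f5 x) μ := h5.const_mul c5
  have i45 : Integrable (fun x => c4 * f4 x + c5 * f5 x) μ := by exact i4.add i5
  have i345 : Integrable (fun x => c3 * f3 x + (c4 * f4 x + c5 * f5 x)) μ := by exact i3.add i45
  have i2345 : Integrable (fun x => c2 * f2 x + (c3 * f3 x + (c4 * f4 x + c5 * f5 x))) μ := by
    exact i2.add i345
  rw [integral_add i1 i2345, integral_add i2 i345, integral_add i3 i45, integral_add i4 i5,
    integral_const_mul, integral_const_mul, integral_const_mul, integral_const_mul,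
    integral_const_mul]

set_option maxHeartbeats 2000000 in
/-- the two-dimensional anisotropic bond-based micromodulus with
peridynamic tensor components `Λ` defined from the elasticity constants `C` by
the stated linear relations reproduces the elasticity constants via the matching
condition `C_{ijkl} = (1/2) ∫_{B_δ(0)} λ(ξ) ξ_i ξ_j ξ_k ξ_l dξ`. -/
theorem statement12 (δ : ℝ) (hδ : 0 < δ)
    (ω : ℝ → ℝ) (hω : Measurable ω) (hωnn : ∀ r ∈ Set.Ioo (0:ℝ) δ, 0 ≤ ω r)
    (m : ℝ)
    (hm : m = ∫ ξ in Metric.ball (0 : EuclideanSpace ℝ (Fin 2)) δ, ω ‖ξ‖ * ‖ξ‖^2)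
    (hmint : IntegrableOn (fun ξ : EuclideanSpace ℝ (Fin 2) => ω ‖ξ‖ * ‖ξ‖^2)
      (Metric.ball (0 : EuclideanSpace ℝ (Fin 2)) δ))
    (hmpos : 0 < m)
    (C1111 C1122 C1112 C2212 C2222 : ℝ)
    (Λ1111 Λ1112 Λ1122 Λ2212 Λ2222 : ℝ)
    (hΛ1111 : Λ1111 = 10*C1111 - 20*C1122 + 2*C2222)
    (hΛ1112 : Λ1112 = 20*C1112 - 12*C2212)
    (hΛ1122 : Λ1122 = (-10*C1111 + 76*C1122 - 10*C2222)/3)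
    (hΛ2212 : Λ2212 = -12*C1112 + 20*C2212)
    (hΛ2222 : Λ2222 = 2*C1111 - 20*C1122 + 10*C2222)
    (lam : EuclideanSpace ℝ (Fin 2) → ℝ)
    (hlam : ∀ ξ : EuclideanSpace ℝ (Fin 2), ξ ≠ 0 →
      lam ξ = (1/m) *
        (Λ1111 * (ξ 0)^4 + 4*Λ1112 * (ξ 0)^3 * (ξ 1) + 6*Λ1122 * (ξ 0)^2 * (ξ 1)^2
          + 4*Λ2212 * (ξ 0) * (ξ 1)^3 + Λ2222 * (ξ 1)^4) * (ω ‖ξ‖ / ‖ξ‖^6)) :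
    (1/2) * (∫ ξ in Metric.ball (0 : EuclideanSpace ℝ (Fin 2)) δ,
        lam ξ * (ξ 0)^4) = C1111 ∧
    (1/2) * (∫ ξ in Metric.ball (0 : EuclideanSpace ℝ (Fin 2)) δ,
        lam ξ * (ξ 0)^3 * (ξ 1)) = C1112 ∧
    (1/2) * (∫ ξ in Metric.ball (0 : EuclideanSpace ℝ (Fin 2)) δ,
        lam ξ * (ξ 0)^2 * (ξ 1)^2) = C1122 ∧
    (1/2) * (∫ ξ in Metric.ball (0 : EuclideanSpace ℝ (Fin 2)) δ,
        lam ξ * (ξ 0) * (ξ 1)^3) = C2212 ∧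
    (1/2) * (∫ ξ in Metric.ball (0 : EuclideanSpace ℝ (Fin 2)) δ,
        lam ξ * (ξ 1)^4) = C2222 := by
  have hπ : (0:ℝ) < π := pi_pos
  have hle : -π ≤ π := by linarith
  have hIoo : ∀ (b a : ℕ), (∫ θ in Set.Ioo (-π) π, Real.sin θ^b * Real.cos θ^a)
      = ∫ θ in (-π)..π, Real.sin θ^b * Real.cos θ^a := fun b a => by
    rw [intervalIntegral.integral_of_le hle, integral_Ioc_eq_integral_Ioo]
  have hm2 : m = (∫ r in Set.Ioo (0:ℝ) δ, ω r * r^3) * (2*π) := by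
    rw [hm, stmt12_radial_m δ hδ ω]
  have hm0 : m ≠ 0 := ne_of_gt hmpos
  have hR : (∫ r in Set.Ioo (0:ℝ) δ, ω r * r^3) = m / (2*π) := by
    rw [hm2]; field_simp
  obtain ⟨a08, a26, a44, a62, a80⟩ := stmt12_ang_even_vals
  -- T values
  have T80 : ∫ ξ in Metric.ball (0 : EuclideanSpace ℝ (Fin 2)) δ,
      ω ‖ξ‖ / ‖ξ‖^6 * ((ξ 0)^8 * (ξ 1)^0) = (m/(2*π)) * (35*π/64) := by
    rw [stmt12_radial_angular δ hδ ω 8 0 (by norm_num), hIoo, a08, hR]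
  have T62 : ∫ ξ in Metric.ball (0 : EuclideanSpace ℝ (Fin 2)) δ,
      ω ‖ξ‖ / ‖ξ‖^6 * ((ξ 0)^6 * (ξ 1)^2) = (m/(2*π)) * (5*π/64) := by
    rw [stmt12_radial_angular δ hδ ω 6 2 (by norm_num), hIoo, a26, hR]
  have T44 : ∫ ξ in Metric.ball (0 : EuclideanSpace ℝ (Fin 2)) δ,
      ω ‖ξ‖ / ‖ξ‖^6 * ((ξ 0)^4 * (ξ 1)^4) = (m/(2*π)) * (3*π/64) := by
    rw [stmt12_radial_angular δ hδ ω 4 4 (by norm_num), hIoo, a44, hR]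
  have T26 : ∫ ξ in Metric.ball (0 : EuclideanSpace ℝ (Fin 2)) δ,
      ω ‖ξ‖ / ‖ξ‖^6 * ((ξ 0)^2 * (ξ 1)^6) = (m/(2*π)) * (5*π/64) := by
    rw [stmt12_radial_angular δ hδ ω 2 6 (by norm_num), hIoo, a62, hR]
  have T08 : ∫ ξ in Metric.ball (0 : EuclideanSpace ℝ (Fin 2)) δ,
      ω ‖ξ‖ / ‖ξ‖^6 * ((ξ 0)^0 * (ξ 1)^8) = (m/(2*π)) * (35*π/64) := by
    rw [stmt12_radial_angular δ hδ ω 0 8 (by norm_num), hIoo, a80, hR]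
  have T71 : ∫ ξ in Metric.ball (0 : EuclideanSpace ℝ (Fin 2)) δ,
      ω ‖ξ‖ / ‖ξ‖^6 * ((ξ 0)^7 * (ξ 1)^1) = 0 := by
    rw [stmt12_radial_angular δ hδ ω 7 1 (by norm_num), hIoo]
    have h := stmt12_ang_odd 0 7
    rw [show 2*0+1 = 1 from rfl] at h
    rw [h, mul_zero]
  have T53 : ∫ ξ in Metric.ball (0 : EuclideanSpace ℝ (Fin 2)) δ,
      ω ‖ξ‖ / ‖ξ‖^6 * ((ξ 0)^5 * (ξ 1)^3) = 0 := by
    rw [stmt12_radial_angular δ hδ ω 5 3 (by norm_num), hIoo]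
    have h := stmt12_ang_odd 1 5
    rw [show 2*1+1 = 3 from rfl] at h
    rw [h, mul_zero]
  have T35 : ∫ ξ in Metric.ball (0 : EuclideanSpace ℝ (Fin 2)) δ,
      ω ‖ξ‖ / ‖ξ‖^6 * ((ξ 0)^3 * (ξ 1)^5) = 0 := by
    rw [stmt12_radial_angular δ hδ ω 3 5 (by norm_num), hIoo]
    have h := stmt12_ang_odd 2 3
    rw [show 2*2+1 = 5 from rfl] at h
    rw [h, mul_zero]
  have T17 : ∫ ξ in Metric.ball (0 : EuclideanSpace ℝ (Fin 2)) δ,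
      ω ‖ξ‖ / ‖ξ‖^6 * ((ξ 0)^1 * (ξ 1)^7) = 0 := by
    rw [stmt12_radial_angular δ hδ ω 1 7 (by norm_num), hIoo]
    have h := stmt12_ang_odd 3 1
    rw [show 2*3+1 = 7 from rfl] at h
    rw [h, mul_zero]
  -- ae equality machinery
  have hnull : volume ({(0 : EuclideanSpace ℝ (Fin 2))} : Set (EuclideanSpace ℝ (Fin 2))) = 0 := by
    simp
  have haeq : ((Metric.ball (0 : EuclideanSpace ℝ (Fin 2)) δ) \ {0} : Set (EuclideanSpace ℝ (Fin 2)))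
      =ᵐ[volume] Metric.ball (0 : EuclideanSpace ℝ (Fin 2)) δ :=
    diff_ae_eq_self.2 (measure_mono_null Set.inter_subset_right hnull)
  have hBmeas : MeasurableSet ((Metric.ball (0 : EuclideanSpace ℝ (Fin 2)) δ) \ {0}) :=
    measurableSet_ball.diff (measurableSet_singleton _)
  have hfint : ∀ a b : ℕ, a + b = 8 →
      IntegrableOn (fun ξ : EuclideanSpace ℝ (Fin 2) => ω ‖ξ‖ / ‖ξ‖^6 * ((ξ 0)^a * (ξ 1)^b))
        (Metric.ball (0 : EuclideanSpace ℝ (Fin 2)) δ) :=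
    fun a b hab => stmt12_int_on δ ω hω hωnn hmint a b hab
  refine ⟨?_, ?_, ?_, ?_, ?_⟩
  · have key : ∫ ξ in Metric.ball (0 : EuclideanSpace ℝ (Fin 2)) δ, lam ξ * (ξ 0)^4
        = (Λ1111/m) * ((m/(2*π)) * (35*π/64))
              + ((4*Λ1112/m) * (0)
              + ((6*Λ1122/m) * ((m/(2*π)) * (5*π/64))
              + ((4*Λ2212/m) * (0)
              + (Λ2222/m) * ((m/(2*π)) * (3*π/64))))) := by
      calc ∫ ξ in Metric.ball (0 : EuclideanSpace ℝ (Fin 2)) δ, lam ξ * (ξ 0)^4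
          = ∫ ξ in (Metric.ball (0 : EuclideanSpace ℝ (Fin 2)) δ) \ {0}, lam ξ * (ξ 0)^4 :=
            (setIntegral_congr_set haeq).symm
        _ = ∫ ξ in (Metric.ball (0 : EuclideanSpace ℝ (Fin 2)) δ) \ {0},
              ((Λ1111/m) * (ω ‖ξ‖ / ‖ξ‖^6 * ((ξ 0)^8 * (ξ 1)^0))
              + ((4*Λ1112/m) * (ω ‖ξ‖ / ‖ξ‖^6 * ((ξ 0)^7 * (ξ 1)^1))
              + ((6*Λ1122/m) * (ω ‖ξ‖ / ‖ξ‖^6 * ((ξ 0)^6 * (ξ 1)^2))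
              + ((4*Λ2212/m) * (ω ‖ξ‖ / ‖ξ‖^6 * ((ξ 0)^5 * (ξ 1)^3))
              + (Λ2222/m) * (ω ‖ξ‖ / ‖ξ‖^6 * ((ξ 0)^4 * (ξ 1)^4)))))) :=
            setIntegral_congr_fun hBmeas (fun ξ hξ => by
              rw [hlam ξ (by simpa using hξ.2)]; ring)
        _ = ∫ ξ in Metric.ball (0 : EuclideanSpace ℝ (Fin 2)) δ,
              ((Λ1111/m) * (ω ‖ξ‖ / ‖ξ‖^6 * ((ξ 0)^8 * (ξ 1)^0))
              + ((4*Λ1112/m) * (ω ‖ξ‖ / ‖ξ‖^6 * ((ξ 0)^7 * (ξ 1)^1))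
              + ((6*Λ1122/m) * (ω ‖ξ‖ / ‖ξ‖^6 * ((ξ 0)^6 * (ξ 1)^2))
              + ((4*Λ2212/m) * (ω ‖ξ‖ / ‖ξ‖^6 * ((ξ 0)^5 * (ξ 1)^3))
              + (Λ2222/m) * (ω ‖ξ‖ / ‖ξ‖^6 * ((ξ 0)^4 * (ξ 1)^4)))))) :=
            setIntegral_congr_set haeq
        _ = (Λ1111/m) * (∫ ξ in Metric.ball (0 : EuclideanSpace ℝ (Fin 2)) δ, ω ‖ξ‖ / ‖ξ‖^6 * ((ξ 0)^8 * (ξ 1)^0))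
              + ((4*Λ1112/m) * (∫ ξ in Metric.ball (0 : EuclideanSpace ℝ (Fin 2)) δ, ω ‖ξ‖ / ‖ξ‖^6 * ((ξ 0)^7 * (ξ 1)^1))
              + ((6*Λ1122/m) * (∫ ξ in Metric.ball (0 : EuclideanSpace ℝ (Fin 2)) δ, ω ‖ξ‖ / ‖ξ‖^6 * ((ξ 0)^6 * (ξ 1)^2))
              + ((4*Λ2212/m) * (∫ ξ in Metric.ball (0 : EuclideanSpace ℝ (Fin 2)) δ, ω ‖ξ‖ / ‖ξ‖^6 * ((ξ 0)^5 * (ξ 1)^3))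
              + (Λ2222/m) * (∫ ξ in Metric.ball (0 : EuclideanSpace ℝ (Fin 2)) δ, ω ‖ξ‖ / ‖ξ‖^6 * ((ξ 0)^4 * (ξ 1)^4))))) :=
            stmt12_sum5 (fun ξ : EuclideanSpace ℝ (Fin 2) => ω ‖ξ‖ / ‖ξ‖^6 * ((ξ 0)^8 * (ξ 1)^0)) (fun ξ : EuclideanSpace ℝ (Fin 2) => ω ‖ξ‖ / ‖ξ‖^6 * ((ξ 0)^7 * (ξ 1)^1)) (fun ξ : EuclideanSpace ℝ (Fin 2) => ω ‖ξ‖ / ‖ξ‖^6 * ((ξ 0)^6 * (ξ 1)^2)) (fun ξ : EuclideanSpace ℝ (Fin 2) => ω ‖ξ‖ / ‖ξ‖^6 * ((ξ 0)^5 * (ξ 1)^3)) (fun ξ : EuclideanSpace ℝ (Fin 2) => ω ‖ξ‖ / ‖ξ‖^6 * ((ξ 0)^4 * (ξ 1)^4)) (Λ1111/m) (4*Λ1112/m) (6*Λ1122/m) (4*Λ2212/m) (Λ2222/m) (hfint 8 0 (by norm_num)) (hfint 7 1 (by norm_num)) (hfint 6 2 (by norm_num)) (hfint 5 3 (by norm_num))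 (hfint 4 4 (by norm_num))
        _ = _ := by rw [T80, T71, T62, T53, T44]
    rw [key, hΛ1111, hΛ1112, hΛ1122, hΛ2212, hΛ2222]
    field_simp
    ring

  · have key : ∫ ξ in Metric.ball (0 : EuclideanSpace ℝ (Fin 2)) δ, lam ξ * (ξ 0)^3 * (ξ 1)
        = (Λ1111/m) * (0)
              + ((4*Λ1112/m) * ((m/(2*π)) * (5*π/64))
              + ((6*Λ1122/m) * (0)
              + ((4*Λ2212/m) * ((m/(2*π)) * (3*π/64))
              + (Λ2222/m) * (0)))) := by
      calc ∫ ξ in Metric.ball (0 : EuclideanSpace ℝ (Fin 2)) δ, lam ξ * (ξ 0)^3 * (ξ 1)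
          = ∫ ξ in (Metric.ball (0 : EuclideanSpace ℝ (Fin 2)) δ) \ {0}, lam ξ * (ξ 0)^3 * (ξ 1) :=
            (setIntegral_congr_set haeq).symm
        _ = ∫ ξ in (Metric.ball (0 : EuclideanSpace ℝ (Fin 2)) δ) \ {0},
              ((Λ1111/m) * (ω ‖ξ‖ / ‖ξ‖^6 * ((ξ 0)^7 * (ξ 1)^1))
              + ((4*Λ1112/m) * (ω ‖ξ‖ / ‖ξ‖^6 * ((ξ 0)^6 * (ξ 1)^2))
              + ((6*Λ1122/m) * (ω ‖ξ‖ / ‖ξ‖^6 * ((ξ 0)^5 * (ξ 1)^3))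
              + ((4*Λ2212/m) * (ω ‖ξ‖ / ‖ξ‖^6 * ((ξ 0)^4 * (ξ 1)^4))
              + (Λ2222/m) * (ω ‖ξ‖ / ‖ξ‖^6 * ((ξ 0)^3 * (ξ 1)^5)))))) :=
            setIntegral_congr_fun hBmeas (fun ξ hξ => by
              rw [hlam ξ (by simpa using hξ.2)]; ring)
        _ = ∫ ξ in Metric.ball (0 : EuclideanSpace ℝ (Fin 2)) δ,
              ((Λ1111/m) * (ω ‖ξ‖ / ‖ξ‖^6 * ((ξ 0)^7 * (ξ 1)^1))
              + ((4*Λ1112/m) * (ω ‖ξ‖ / ‖ξ‖^6 * ((ξ 0)^6 * (ξ 1)^2))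
              + ((6*Λ1122/m) * (ω ‖ξ‖ / ‖ξ‖^6 * ((ξ 0)^5 * (ξ 1)^3))
              + ((4*Λ2212/m) * (ω ‖ξ‖ / ‖ξ‖^6 * ((ξ 0)^4 * (ξ 1)^4))
              + (Λ2222/m) * (ω ‖ξ‖ / ‖ξ‖^6 * ((ξ 0)^3 * (ξ 1)^5)))))) :=
            setIntegral_congr_set haeq
        _ = (Λ1111/m) * (∫ ξ in Metric.ball (0 : EuclideanSpace ℝ (Fin 2)) δ, ω ‖ξ‖ / ‖ξ‖^6 * ((ξ 0)^7 * (ξ 1)^1))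
              + ((4*Λ1112/m) * (∫ ξ in Metric.ball (0 : EuclideanSpace ℝ (Fin 2)) δ, ω ‖ξ‖ / ‖ξ‖^6 * ((ξ 0)^6 * (ξ 1)^2))
              + ((6*Λ1122/m) * (∫ ξ in Metric.ball (0 : EuclideanSpace ℝ (Fin 2)) δ, ω ‖ξ‖ / ‖ξ‖^6 * ((ξ 0)^5 * (ξ 1)^3))
              + ((4*Λ2212/m) * (∫ ξ in Metric.ball (0 : EuclideanSpace ℝ (Fin 2)) δ, ω ‖ξ‖ / ‖ξ‖^6 * ((ξ 0)^4 * (ξ 1)^4))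
              + (Λ2222/m) * (∫ ξ in Metric.ball (0 : EuclideanSpace ℝ (Fin 2)) δ, ω ‖ξ‖ / ‖ξ‖^6 * ((ξ 0)^3 * (ξ 1)^5))))) :=
            stmt12_sum5 (fun ξ : EuclideanSpace ℝ (Fin 2) => ω ‖ξ‖ / ‖ξ‖^6 * ((ξ 0)^7 * (ξ 1)^1)) (fun ξ : EuclideanSpace ℝ (Fin 2) => ω ‖ξ‖ / ‖ξ‖^6 * ((ξ 0)^6 * (ξ 1)^2)) (fun ξ : EuclideanSpace ℝ (Fin 2) => ω ‖ξ‖ / ‖ξ‖^6 * ((ξ 0)^5 * (ξ 1)^3)) (fun ξ : EuclideanSpace ℝ (Fin 2) => ω ‖ξ‖ / ‖ξ‖^6 * ((ξ 0)^4 * (ξ 1)^4)) (fun ξ : EuclideanSpace ℝ (Fin 2) => ω ‖ξ‖ / ‖ξ‖^6 * ((ξ 0)^3 * (ξ 1)^5)) (Λ1111/m) (4*Λ1112/m) (6*Λ1122/m) (4*Λ2212/m) (Λ2222/m) (hfint 7 1 (by norm_num)) (hfint 6 2 (by norm_num)) (hfint 5 3 (by norm_num)) (hfint 4 4 (by norm_num))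 (hfint 3 5 (by norm_num))
        _ = _ := by rw [T71, T62, T53, T44, T35]
    rw [key, hΛ1111, hΛ1112, hΛ1122, hΛ2212, hΛ2222]
    field_simp
    ring

  · have key : ∫ ξ in Metric.ball (0 : EuclideanSpace ℝ (Fin 2)) δ, lam ξ * (ξ 0)^2 * (ξ 1)^2
        = (Λ1111/m) * ((m/(2*π)) * (5*π/64))
              + ((4*Λ1112/m) * (0)
              + ((6*Λ1122/m) * ((m/(2*π)) * (3*π/64))
              + ((4*Λ2212/m) * (0)
              + (Λ2222/m) * ((m/(2*π)) * (5*π/64))))) := by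
      calc ∫ ξ in Metric.ball (0 : EuclideanSpace ℝ (Fin 2)) δ, lam ξ * (ξ 0)^2 * (ξ 1)^2
          = ∫ ξ in (Metric.ball (0 : EuclideanSpace ℝ (Fin 2)) δ) \ {0}, lam ξ * (ξ 0)^2 * (ξ 1)^2 :=
            (setIntegral_congr_set haeq).symm
        _ = ∫ ξ in (Metric.ball (0 : EuclideanSpace ℝ (Fin 2)) δ) \ {0},
              ((Λ1111/m) * (ω ‖ξ‖ / ‖ξ‖^6 * ((ξ 0)^6 * (ξ 1)^2))
              + ((4*Λ1112/m) * (ω ‖ξ‖ / ‖ξ‖^6 * ((ξ 0)^5 * (ξ 1)^3))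
              + ((6*Λ1122/m) * (ω ‖ξ‖ / ‖ξ‖^6 * ((ξ 0)^4 * (ξ 1)^4))
              + ((4*Λ2212/m) * (ω ‖ξ‖ / ‖ξ‖^6 * ((ξ 0)^3 * (ξ 1)^5))
              + (Λ2222/m) * (ω ‖ξ‖ / ‖ξ‖^6 * ((ξ 0)^2 * (ξ 1)^6)))))) :=
            setIntegral_congr_fun hBmeas (fun ξ hξ => by
              rw [hlam ξ (by simpa using hξ.2)]; ring)
        _ = ∫ ξ in Metric.ball (0 : EuclideanSpace ℝ (Fin 2)) δ,
              ((Λ1111/m) * (ω ‖ξ‖ / ‖ξ‖^6 * ((ξ 0)^6 * (ξ 1)^2))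
              + ((4*Λ1112/m) * (ω ‖ξ‖ / ‖ξ‖^6 * ((ξ 0)^5 * (ξ 1)^3))
              + ((6*Λ1122/m) * (ω ‖ξ‖ / ‖ξ‖^6 * ((ξ 0)^4 * (ξ 1)^4))
              + ((4*Λ2212/m) * (ω ‖ξ‖ / ‖ξ‖^6 * ((ξ 0)^3 * (ξ 1)^5))
              + (Λ2222/m) * (ω ‖ξ‖ / ‖ξ‖^6 * ((ξ 0)^2 * (ξ 1)^6)))))) :=
            setIntegral_congr_set haeq
        _ = (Λ1111/m) * (∫ ξ in Metric.ball (0 : EuclideanSpace ℝ (Fin 2)) δ, ω ‖ξ‖ / ‖ξ‖^6 * ((ξ 0)^6 * (ξ 1)^2))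
              + ((4*Λ1112/m) * (∫ ξ in Metric.ball (0 : EuclideanSpace ℝ (Fin 2)) δ, ω ‖ξ‖ / ‖ξ‖^6 * ((ξ 0)^5 * (ξ 1)^3))
              + ((6*Λ1122/m) * (∫ ξ in Metric.ball (0 : EuclideanSpace ℝ (Fin 2)) δ, ω ‖ξ‖ / ‖ξ‖^6 * ((ξ 0)^4 * (ξ 1)^4))
              + ((4*Λ2212/m) * (∫ ξ in Metric.ball (0 : EuclideanSpace ℝ (Fin 2)) δ, ω ‖ξ‖ / ‖ξ‖^6 * ((ξ 0)^3 * (ξ 1)^5))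
              + (Λ2222/m) * (∫ ξ in Metric.ball (0 : EuclideanSpace ℝ (Fin 2)) δ, ω ‖ξ‖ / ‖ξ‖^6 * ((ξ 0)^2 * (ξ 1)^6))))) :=
            stmt12_sum5 (fun ξ : EuclideanSpace ℝ (Fin 2) => ω ‖ξ‖ / ‖ξ‖^6 * ((ξ 0)^6 * (ξ 1)^2)) (fun ξ : EuclideanSpace ℝ (Fin 2) => ω ‖ξ‖ / ‖ξ‖^6 * ((ξ 0)^5 * (ξ 1)^3)) (fun ξ : EuclideanSpace ℝ (Fin 2) => ω ‖ξ‖ / ‖ξ‖^6 * ((ξ 0)^4 * (ξ 1)^4)) (fun ξ : EuclideanSpace ℝ (Fin 2) => ω ‖ξ‖ / ‖ξ‖^6 * ((ξ 0)^3 * (ξ 1)^5)) (fun ξ : EuclideanSpace ℝ (Fin 2) => ω ‖ξ‖ / ‖ξ‖^6 * ((ξ 0)^2 * (ξ 1)^6)) (Λ1111/m) (4*Λ1112/m) (6*Λ1122/m) (4*Λ2212/m) (Λ2222/m) (hfint 6 2 (by norm_num)) (hfint 5 3 (by norm_num)) (hfint 4 4 (by norm_num)) (hfint 3 5 (by norm_num))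 (hfint 2 6 (by norm_num))
        _ = _ := by rw [T62, T53, T44, T35, T26]
    rw [key, hΛ1111, hΛ1112, hΛ1122, hΛ2212, hΛ2222]
    field_simp
    ring

  · have key : ∫ ξ in Metric.ball (0 : EuclideanSpace ℝ (Fin 2)) δ, lam ξ * (ξ 0) * (ξ 1)^3
        = (Λ1111/m) * (0)
              + ((4*Λ1112/m) * ((m/(2*π)) * (3*π/64))
              + ((6*Λ1122/m) * (0)
              + ((4*Λ2212/m) * ((m/(2*π)) * (5*π/64))
              + (Λ2222/m) * (0)))) := by
      calc ∫ ξ in Metric.ball (0 : EuclideanSpace ℝ (Fin 2)) δ, lam ξ * (ξ 0) * (ξ 1)^3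
          = ∫ ξ in (Metric.ball (0 : EuclideanSpace ℝ (Fin 2)) δ) \ {0}, lam ξ * (ξ 0) * (ξ 1)^3 :=
            (setIntegral_congr_set haeq).symm
        _ = ∫ ξ in (Metric.ball (0 : EuclideanSpace ℝ (Fin 2)) δ) \ {0},
              ((Λ1111/m) * (ω ‖ξ‖ / ‖ξ‖^6 * ((ξ 0)^5 * (ξ 1)^3))
              + ((4*Λ1112/m) * (ω ‖ξ‖ / ‖ξ‖^6 * ((ξ 0)^4 * (ξ 1)^4))
              + ((6*Λ1122/m) * (ω ‖ξ‖ / ‖ξ‖^6 * ((ξ 0)^3 * (ξ 1)^5))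
              + ((4*Λ2212/m) * (ω ‖ξ‖ / ‖ξ‖^6 * ((ξ 0)^2 * (ξ 1)^6))
              + (Λ2222/m) * (ω ‖ξ‖ / ‖ξ‖^6 * ((ξ 0)^1 * (ξ 1)^7)))))) :=
            setIntegral_congr_fun hBmeas (fun ξ hξ => by
              rw [hlam ξ (by simpa using hξ.2)]; ring)
        _ = ∫ ξ in Metric.ball (0 : EuclideanSpace ℝ (Fin 2)) δ,
              ((Λ1111/m) * (ω ‖ξ‖ / ‖ξ‖^6 * ((ξ 0)^5 * (ξ 1)^3))
              + ((4*Λ1112/m) * (ω ‖ξ‖ / ‖ξ‖^6 * ((ξ 0)^4 * (ξ 1)^4))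
              + ((6*Λ1122/m) * (ω ‖ξ‖ / ‖ξ‖^6 * ((ξ 0)^3 * (ξ 1)^5))
              + ((4*Λ2212/m) * (ω ‖ξ‖ / ‖ξ‖^6 * ((ξ 0)^2 * (ξ 1)^6))
              + (Λ2222/m) * (ω ‖ξ‖ / ‖ξ‖^6 * ((ξ 0)^1 * (ξ 1)^7)))))) :=
            setIntegral_congr_set haeq
        _ = (Λ1111/m) * (∫ ξ in Metric.ball (0 : EuclideanSpace ℝ (Fin 2)) δ, ω ‖ξ‖ / ‖ξ‖^6 * ((ξ 0)^5 * (ξ 1)^3))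
              + ((4*Λ1112/m) * (∫ ξ in Metric.ball (0 : EuclideanSpace ℝ (Fin 2)) δ, ω ‖ξ‖ / ‖ξ‖^6 * ((ξ 0)^4 * (ξ 1)^4))
              + ((6*Λ1122/m) * (∫ ξ in Metric.ball (0 : EuclideanSpace ℝ (Fin 2)) δ, ω ‖ξ‖ / ‖ξ‖^6 * ((ξ 0)^3 * (ξ 1)^5))
              + ((4*Λ2212/m) * (∫ ξ in Metric.ball (0 : EuclideanSpace ℝ (Fin 2)) δ, ω ‖ξ‖ / ‖ξ‖^6 * ((ξ 0)^2 * (ξ 1)^6))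
              + (Λ2222/m) * (∫ ξ in Metric.ball (0 : EuclideanSpace ℝ (Fin 2)) δ, ω ‖ξ‖ / ‖ξ‖^6 * ((ξ 0)^1 * (ξ 1)^7))))) :=
            stmt12_sum5 (fun ξ : EuclideanSpace ℝ (Fin 2) => ω ‖ξ‖ / ‖ξ‖^6 * ((ξ 0)^5 * (ξ 1)^3)) (fun ξ : EuclideanSpace ℝ (Fin 2) => ω ‖ξ‖ / ‖ξ‖^6 * ((ξ 0)^4 * (ξ 1)^4)) (fun ξ : EuclideanSpace ℝ (Fin 2) => ω ‖ξ‖ / ‖ξ‖^6 * ((ξ 0)^3 * (ξ 1)^5)) (fun ξ : EuclideanSpace ℝ (Fin 2) => ω ‖ξ‖ / ‖ξ‖^6 * ((ξ 0)^2 * (ξ 1)^6)) (fun ξ : EuclideanSpace ℝ (Fin 2) => ω ‖ξ‖ / ‖ξ‖^6 * ((ξ 0)^1 * (ξ 1)^7)) (Λ1111/m) (4*Λ1112/m) (6*Λ1122/m) (4*Λ2212/m) (Λ2222/m) (hfint 5 3 (by norm_num)) (hfint 4 4 (by norm_num)) (hfint 3 5 (by norm_num)) (hfint 2 6 (by norm_num))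 (hfint 1 7 (by norm_num))
        _ = _ := by rw [T53, T44, T35, T26, T17]
    rw [key, hΛ1111, hΛ1112, hΛ1122, hΛ2212, hΛ2222]
    field_simp
    ring

  · have key : ∫ ξ in Metric.ball (0 : EuclideanSpace ℝ (Fin 2)) δ, lam ξ * (ξ 1)^4
        = (Λ1111/m) * ((m/(2*π)) * (3*π/64))
              + ((4*Λ1112/m) * (0)
              + ((6*Λ1122/m) * ((m/(2*π)) * (5*π/64))
              + ((4*Λ2212/m) * (0)
              + (Λ2222/m) * ((m/(2*π)) * (35*π/64))))) := by
      calc ∫ ξ in Metric.ball (0 : EuclideanSpace ℝ (Fin 2)) δ, lam ξ * (ξ 1)^4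
          = ∫ ξ in (Metric.ball (0 : EuclideanSpace ℝ (Fin 2)) δ) \ {0}, lam ξ * (ξ 1)^4 :=
            (setIntegral_congr_set haeq).symm
        _ = ∫ ξ in (Metric.ball (0 : EuclideanSpace ℝ (Fin 2)) δ) \ {0},
              ((Λ1111/m) * (ω ‖ξ‖ / ‖ξ‖^6 * ((ξ 0)^4 * (ξ 1)^4))
              + ((4*Λ1112/m) * (ω ‖ξ‖ / ‖ξ‖^6 * ((ξ 0)^3 * (ξ 1)^5))
              + ((6*Λ1122/m) * (ω ‖ξ‖ / ‖ξ‖^6 * ((ξ 0)^2 * (ξ 1)^6))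
              + ((4*Λ2212/m) * (ω ‖ξ‖ / ‖ξ‖^6 * ((ξ 0)^1 * (ξ 1)^7))
              + (Λ2222/m) * (ω ‖ξ‖ / ‖ξ‖^6 * ((ξ 0)^0 * (ξ 1)^8)))))) :=
            setIntegral_congr_fun hBmeas (fun ξ hξ => by
              rw [hlam ξ (by simpa using hξ.2)]; ring)
        _ = ∫ ξ in Metric.ball (0 : EuclideanSpace ℝ (Fin 2)) δ,
              ((Λ1111/m) * (ω ‖ξ‖ / ‖ξ‖^6 * ((ξ 0)^4 * (ξ 1)^4))
              + ((4*Λ1112/m) * (ω ‖ξ‖ / ‖ξ‖^6 * ((ξ 0)^3 * (ξ 1)^5))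
              + ((6*Λ1122/m) * (ω ‖ξ‖ / ‖ξ‖^6 * ((ξ 0)^2 * (ξ 1)^6))
              + ((4*Λ2212/m) * (ω ‖ξ‖ / ‖ξ‖^6 * ((ξ 0)^1 * (ξ 1)^7))
              + (Λ2222/m) * (ω ‖ξ‖ / ‖ξ‖^6 * ((ξ 0)^0 * (ξ 1)^8)))))) :=
            setIntegral_congr_set haeq
        _ = (Λ1111/m) * (∫ ξ in Metric.ball (0 : EuclideanSpace ℝ (Fin 2)) δ, ω ‖ξ‖ / ‖ξ‖^6 * ((ξ 0)^4 * (ξ 1)^4))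
              + ((4*Λ1112/m) * (∫ ξ in Metric.ball (0 : EuclideanSpace ℝ (Fin 2)) δ, ω ‖ξ‖ / ‖ξ‖^6 * ((ξ 0)^3 * (ξ 1)^5))
              + ((6*Λ1122/m) * (∫ ξ in Metric.ball (0 : EuclideanSpace ℝ (Fin 2)) δ, ω ‖ξ‖ / ‖ξ‖^6 * ((ξ 0)^2 * (ξ 1)^6))
              + ((4*Λ2212/m) * (∫ ξ in Metric.ball (0 : EuclideanSpace ℝ (Fin 2)) δ, ω ‖ξ‖ / ‖ξ‖^6 * ((ξ 0)^1 * (ξ 1)^7))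
              + (Λ2222/m) * (∫ ξ in Metric.ball (0 : EuclideanSpace ℝ (Fin 2)) δ, ω ‖ξ‖ / ‖ξ‖^6 * ((ξ 0)^0 * (ξ 1)^8))))) :=
            stmt12_sum5 (fun ξ : EuclideanSpace ℝ (Fin 2) => ω ‖ξ‖ / ‖ξ‖^6 * ((ξ 0)^4 * (ξ 1)^4)) (fun ξ : EuclideanSpace ℝ (Fin 2) => ω ‖ξ‖ / ‖ξ‖^6 * ((ξ 0)^3 * (ξ 1)^5)) (fun ξ : EuclideanSpace ℝ (Fin 2) => ω ‖ξ‖ / ‖ξ‖^6 * ((ξ 0)^2 * (ξ 1)^6)) (fun ξ : EuclideanSpace ℝ (Fin 2) => ω ‖ξ‖ / ‖ξ‖^6 * ((ξ 0)^1 * (ξ 1)^7)) (fun ξ : EuclideanSpace ℝ (Fin 2) => ω ‖ξ‖ / ‖ξ‖^6 * ((ξ 0)^0 * (ξ 1)^8)) (Λ1111/m) (4*Λ1112/m) (6*Λ1122/m) (4*Λ2212/m) (Λ2222/m) (hfint 4 4 (by norm_num)) (hfint 3 5 (by norm_num)) (hfint 2 6 (by norm_num)) (hfint 1 7 (by norm_num))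 (hfint 0 8 (by norm_num))
        _ = _ := by rw [T44, T35, T26, T17, T08]
    rw [key, hΛ1111, hΛ1112, hΛ1122, hΛ2212, hΛ2222]
    field_simp
    ring
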